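/- For every n ≥ 2, the composite map h = d ∘ c restricted to S^n is a 4-Lipschitz (4-contracting) surjection of S^n onto S^{n−1} ⊂ ℝ^n; moreover h maps the subsphere {x ∈ S^n : x_1 = ⋯ = x_{n−1} = 0} to the single point (0, …, 0, 1) ∈ S^{n−1} and the subsphere {x ∈ S^n : x_n = x_{n+1} = 0} to the single point (0, …, 0, −1) ∈ S^{n−1}. -/

import Mathlib

/-- The spherical crushing map `c : ℝ^{n+1} → ℝ^{n+1}`,
`c(x_1, …, x_{n+1}) = (x_1, …, x_{n−1}, √(x_n² + x_{n+1}²), 0)`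
(here coordinates `x_1, …, x_{n+1}` correspond to indices `0, …, n`). -/
noncomputable def crush (n : ℕ) (x : EuclideanSpace ℝ (Fin (n + 1))) :
    EuclideanSpace ℝ (Fin (n + 1)) := WithLp.toLp 2 fun i =>
  if (i : ℕ) < n - 1 then x i
  else if (i : ℕ) = n - 1 then
    Real.sqrt ((x ⟨n - 1, by omega⟩) ^ 2 + (x ⟨n, by omega⟩) ^ 2)
  else 0

/-- The angle-doubling map `d : ℝ^{n+1} → ℝ^n`,
`d(x_1, …, x_{n+1}) = (2x_n x_1, …, 2x_n x_{n−1}, 2x_n² − 1)`. -/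
noncomputable def doubling (n : ℕ) (x : EuclideanSpace ℝ (Fin (n + 1))) :
    EuclideanSpace ℝ (Fin n) := WithLp.toLp 2 fun j =>
  if (j : ℕ) < n - 1 then 2 * x ⟨n - 1, by omega⟩ * x (Fin.castSucc j)
  else 2 * (x ⟨n - 1, by omega⟩) ^ 2 - 1

/-- The point `(0, …, 0, 1) ∈ S^{n−1} ⊂ ℝ^n`. -/
def northPole (n : ℕ) : EuclideanSpace ℝ (Fin n) := WithLp.toLp 2 fun j =>
  if (j : ℕ) = n - 1 then 1 else 0

/-- The point `(0, …, 0, −1) ∈ S^{n−1} ⊂ ℝ^n`. -/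
def southPole (n : ℕ) : EuclideanSpace ℝ (Fin n) := WithLp.toLp 2 fun j =>
  if (j : ℕ) = n - 1 then -1 else 0

/- auxiliary -/

noncomputable def rad (m : ℕ) (x : EuclideanSpace ℝ (Fin (m+3))) : ℝ :=
  Real.sqrt ((x ⟨m+1, by omega⟩) ^ 2 + (x ⟨m+2, by omega⟩) ^ 2)

lemma rad_nonneg (m : ℕ) (x : EuclideanSpace ℝ (Fin (m+3))) : 0 ≤ rad m x :=
  Real.sqrt_nonneg _

lemma rad_sq (m : ℕ) (x : EuclideanSpace ℝ (Fin (m+3))) :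
    (rad m x) ^ 2 = (x ⟨m+1, by omega⟩) ^ 2 + (x ⟨m+2, by omega⟩) ^ 2 :=
  Real.sq_sqrt (by positivity)

lemma hval1 (m : ℕ) (x : EuclideanSpace ℝ (Fin (m+3))) (j : Fin (m+1)) :
    (doubling (m+2) ∘ crush (m+2)) x (j.castSucc) =
      2 * rad m x * x (j.castSucc.castSucc) := by
  have hj2 : (j : ℕ) < m + 2 - 1 := by omega
  simp only [Function.comp_apply, doubling, crush, PiLp.toLp_apply, Fin.coe_castSucc, if_pos hj2]
  norm_num
  exact Or.inl rfl

lemma hval2 (m : ℕ) (x : EuclideanSpace ℝ (Fin (m+3))) :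
    (doubling (m+2) ∘ crush (m+2)) x ⟨m+1, by omega⟩ = 2 * (rad m x) ^ 2 - 1 := by
  simp only [Function.comp_apply, doubling, crush, PiLp.toLp_apply]
  norm_num
  exact congrArg (fun t => t ^ 2) rfl

lemma sum3 {m : ℕ} (f : Fin (m+3) → ℝ) :
    ∑ i, f i = (∑ j : Fin (m+1), f (j.castSucc.castSucc)) + f ⟨m+1, by omega⟩
      + f ⟨m+2, by omega⟩ := by
  rw [Fin.sum_univ_castSucc, Fin.sum_univ_castSucc]
  rfl

lemma sum2 {m : ℕ} (f : Fin (m+2) → ℝ) :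
    ∑ i, f i = (∑ j : Fin (m+1), f (j.castSucc)) + f ⟨m+1, by omega⟩ := by
  rw [Fin.sum_univ_castSucc]
  rfl

lemma mem_sphere_iff_sum {k : ℕ} (x : EuclideanSpace ℝ (Fin k)) :
    x ∈ Metric.sphere (0 : EuclideanSpace ℝ (Fin k)) 1 ↔ ∑ i, x i ^ 2 = 1 := by
  rw [mem_sphere_zero_iff_norm, EuclideanSpace.norm_eq]
  simp only [Real.norm_eq_abs, sq_abs]
  constructor
  · intro h
    have := congrArg (· ^ 2) h
    simpa [Real.sq_sqrt (Finset.sum_nonneg fun i _ => sq_nonneg (x i))] using this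
  · intro h; rw [h, Real.sqrt_one]

lemma key_ineq (a b S : ℝ) (ha : 0 ≤ a) (ha1 : a ≤ 1) (hb1 : b ≤ 1)
    (hS : 2*S ≤ (1-a^2) + (1-b^2)) :
    (4*a^2*(1-a^2) + 4*b^2*(1-b^2) - 8*a*b*S) + 4*(a^2-b^2)^2 ≤
      16*((1-a^2)+(1-b^2) - 2*S + (a-b)^2) := by
  nlinarith [mul_nonneg (by nlinarith : (0:ℝ) ≤ 4 - a*b) (by linarith : 0 ≤ (1-a^2)+(1-b^2)-2*S),
    mul_nonneg (sq_nonneg (a-b)) (by nlinarith : (0:ℝ) ≤ 3 - a*b)]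

lemma sqrt_diff (p q r s : ℝ) :
    (Real.sqrt (p^2+q^2) - Real.sqrt (r^2+s^2))^2 ≤ (p-r)^2 + (q-s)^2 := by
  set A := Real.sqrt (p^2+q^2) with hA
  set B := Real.sqrt (r^2+s^2) with hB
  have hA0 : 0 ≤ A := Real.sqrt_nonneg _
  have hB0 : 0 ≤ B := Real.sqrt_nonneg _
  have hA2 : A^2 = p^2+q^2 := Real.sq_sqrt (by positivity)
  have hB2 : B^2 = r^2+s^2 := Real.sq_sqrt (by positivity)
  have h : p*r + q*s ≤ A*B := by
    nlinarith [sq_nonneg (p*s - q*r), mul_nonneg hA0 hB0, sq_nonneg (A*B - p*r - q*s)]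
  nlinarith

/-- On the sphere, the tail sum in terms of `rad`. -/
lemma tail_sum {m : ℕ} (x : EuclideanSpace ℝ (Fin (m+3)))
    (hx : x ∈ Metric.sphere (0 : EuclideanSpace ℝ (Fin (m+3))) 1) :
    ∑ j : Fin (m+1), x (j.castSucc.castSucc) ^ 2 = 1 - (rad m x) ^ 2 := by
  have h1 : ∑ i, x i ^ 2 = 1 := (mem_sphere_iff_sum x).1 hx
  rw [sum3 (fun i => x i ^ 2)] at h1
  rw [rad_sq]
  linarith

lemma rad_le_one {m : ℕ} (x : EuclideanSpace ℝ (Fin (m+3)))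
    (hx : x ∈ Metric.sphere (0 : EuclideanSpace ℝ (Fin (m+3))) 1) :
    rad m x ≤ 1 := by
  have h1 := tail_sum x hx
  have h2 : 0 ≤ ∑ j : Fin (m+1), x (j.castSucc.castSucc) ^ 2 :=
    Finset.sum_nonneg fun j _ => sq_nonneg _
  nlinarith [rad_nonneg m x]

theorem crushing_composite_four_contracting (n : ℕ) (hn : 2 ≤ n) :
    LipschitzOnWith 4 (doubling n ∘ crush n)
      (Metric.sphere (0 : EuclideanSpace ℝ (Fin (n + 1))) 1) ∧
    (doubling n ∘ crush n) '' Metric.sphere (0 : EuclideanSpace ℝ (Fin (n + 1))) 1 =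
      Metric.sphere (0 : EuclideanSpace ℝ (Fin n)) 1 ∧
    (∀ x ∈ Metric.sphere (0 : EuclideanSpace ℝ (Fin (n + 1))) 1,
      (∀ i : Fin (n + 1), (i : ℕ) < n - 1 → x i = 0) →
        (doubling n ∘ crush n) x = northPole n) ∧
    (∀ x ∈ Metric.sphere (0 : EuclideanSpace ℝ (Fin (n + 1))) 1,
      x ⟨n - 1, by omega⟩ = 0 → x ⟨n, by omega⟩ = 0 →
        (doubling n ∘ crush n) x = southPole n) := by
  obtain ⟨m, rfl⟩ : ∃ m, n = m + 2 := ⟨n - 2, by omega⟩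
  refine ⟨?_, ?_, ?_, ?_⟩
  · -- Lipschitz
    apply LipschitzOnWith.of_dist_le_mul
    intro x hx y hy
    have hcoe : ((4 : NNReal) : ℝ) = 4 := by norm_num
    rw [hcoe, EuclideanSpace.dist_eq, EuclideanSpace.dist_eq]
    have h4 : (4 : ℝ) * Real.sqrt (∑ i, dist (x i) (y i) ^ 2) =
        Real.sqrt (16 * ∑ i, dist (x i) (y i) ^ 2) := by
      rw [show (16:ℝ) = 4^2 by norm_num, Real.sqrt_mul (by positivity),
        Real.sqrt_sq (by norm_num)]
    rw [h4]
    apply Real.sqrt_le_sqrt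
    simp only [Real.dist_eq, sq_abs]
    rw [sum2 (fun i => ((doubling (m+2) ∘ crush (m+2)) x i
        - (doubling (m+2) ∘ crush (m+2)) y i) ^ 2),
      sum3 (fun i => (x i - y i) ^ 2)]
    simp only [hval1, hval2]
    set a := rad m x with hadef
    set b := rad m y with hbdef
    set S := ∑ j : Fin (m+1), x (j.castSucc.castSucc) * y (j.castSucc.castSucc) with hS
    have ha0 : 0 ≤ a := rad_nonneg m x
    have hb0 : 0 ≤ b := rad_nonneg m y
    have ha1 : a ≤ 1 := rad_le_one x hx
    have hb1 : b ≤ 1 := rad_le_one y hy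
    have hPa : ∑ j : Fin (m+1), x (j.castSucc.castSucc) ^ 2 = 1 - a^2 := tail_sum x hx
    have hPb : ∑ j : Fin (m+1), y (j.castSucc.castSucc) ^ 2 = 1 - b^2 := tail_sum y hy
    have e1 : ∑ j : Fin (m+1),
        (2 * a * x (j.castSucc.castSucc) - 2 * b * y (j.castSucc.castSucc)) ^ 2
        = 4*a^2*(1-a^2) + 4*b^2*(1-b^2) - 8*a*b*S := by
      have : ∀ j : Fin (m+1),
          (2 * a * x (j.castSucc.castSucc) - 2 * b * y (j.castSucc.castSucc)) ^ 2
          = 4*a^2 * x (j.castSucc.castSucc) ^ 2 + 4*b^2 * y (j.castSucc.castSucc) ^ 2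
            - 8*a*b * (x (j.castSucc.castSucc) * y (j.castSucc.castSucc)) := fun j => by ring
      rw [Finset.sum_congr rfl fun j _ => this j]
      rw [Finset.sum_sub_distrib, Finset.sum_add_distrib, ← Finset.mul_sum, ← Finset.mul_sum,
        ← Finset.mul_sum, hPa, hPb]
    have e2 : ∑ j : Fin (m+1),
        (x (j.castSucc.castSucc) - y (j.castSucc.castSucc)) ^ 2
        = (1-a^2) + (1-b^2) - 2*S := by
      have : ∀ j : Fin (m+1),
          (x (j.castSucc.castSucc) - y (j.castSucc.castSucc)) ^ 2
          = x (j.castSucc.castSucc) ^ 2 + y (j.castSucc.castSucc) ^ 2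
            - 2 * (x (j.castSucc.castSucc) * y (j.castSucc.castSucc)) := fun j => by ring
      rw [Finset.sum_congr rfl fun j _ => this j]
      rw [Finset.sum_sub_distrib, Finset.sum_add_distrib, ← Finset.mul_sum, hPa, hPb]
    have hSb : 2 * S ≤ (1-a^2) + (1-b^2) := by
      have h0 : 0 ≤ ∑ j : Fin (m+1),
          (x (j.castSucc.castSucc) - y (j.castSucc.castSucc)) ^ 2 :=
        Finset.sum_nonneg fun j _ => sq_nonneg _
      rw [e2] at h0; linarith
    have hab : (a - b)^2 ≤ (x ⟨m+1, by omega⟩ - y ⟨m+1, by omega⟩)^2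
        + (x ⟨m+2, by omega⟩ - y ⟨m+2, by omega⟩)^2 := sqrt_diff _ _ _ _
    have hk := key_ineq a b S ha0 ha1 hb1 hSb
    rw [e1]
    have elast : (2*a^2 - 1 - (2*b^2 - 1))^2 = 4*(a^2-b^2)^2 := by ring
    rw [elast, e2]  -- may not be in this exact shape; adjust
    nlinarith [hab, hk]
  · -- image
    ext y
    constructor
    · rintro ⟨x, hx, rfl⟩
      rw [mem_sphere_iff_sum]
      rw [sum2 (fun i => (doubling (m+2) ∘ crush (m+2)) x i ^ 2)]
      simp only [hval1, hval2]
      have hPa := tail_sum x hx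
      have e1 : ∑ j : Fin (m+1), (2 * rad m x * x (j.castSucc.castSucc)) ^ 2
          = 4 * (rad m x)^2 * (1 - (rad m x)^2) := by
        have : ∀ j : Fin (m+1), (2 * rad m x * x (j.castSucc.castSucc)) ^ 2
            = 4 * (rad m x)^2 * x (j.castSucc.castSucc) ^ 2 := fun j => by ring
        rw [Finset.sum_congr rfl fun j _ => this j, ← Finset.mul_sum, hPa]
      rw [e1]; ring
    · intro hy
      have hy1 : ∑ i, y i ^ 2 = 1 := (mem_sphere_iff_sum y).1 hy
      rw [sum2 (fun i => y i ^ 2)] at hy1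
      set β := y ⟨m+1, by omega⟩ with hβdef
      have hQy : ∑ j : Fin (m+1), y (j.castSucc) ^ 2 = 1 - β^2 := by linarith
      have hQy0 : 0 ≤ ∑ j : Fin (m+1), y (j.castSucc) ^ 2 :=
        Finset.sum_nonneg fun j _ => sq_nonneg _
      have hβ1 : -1 ≤ β := by nlinarith
      by_cases hβ : β = -1
      · -- y is the south pole; preimage: e₀
        have hz : ∀ j : Fin (m+1), y (j.castSucc) = 0 := by
          have h0 : ∑ j : Fin (m+1), y (j.castSucc) ^ 2 = 0 := by
            rw [hQy, hβ]; ring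
          intro j
          have := (Finset.sum_eq_zero_iff_of_nonneg
            (fun j _ => sq_nonneg (y (j.castSucc)))).1 h0 j (Finset.mem_univ j)
          exact pow_eq_zero_iff (n := 2) (by norm_num) |>.1 this
        refine ⟨EuclideanSpace.single (0 : Fin (m+3)) 1, ?_, ?_⟩
        · rw [mem_sphere_zero_iff_norm, EuclideanSpace.norm_single, norm_one]
        · set x := EuclideanSpace.single (0 : Fin (m+3)) (1:ℝ) with hxdef
          have hxa : x ⟨m+1, by omega⟩ = 0 := by
            rw [hxdef, EuclideanSpace.single_apply, if_neg (by simp [Fin.ext_iff])]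
          have hxb : x ⟨m+2, by omega⟩ = 0 := by
            rw [hxdef, EuclideanSpace.single_apply, if_neg (by simp [Fin.ext_iff])]
          have hr : rad m x = 0 := by simp [rad, hxa, hxb]
          ext i
          refine Fin.lastCases ?_ ?_ i
          · rw [show Fin.last (m+1) = (⟨m+1, by omega⟩ : Fin (m+2)) from rfl, hval2, hr, ← hβdef, hβ]
            norm_num
          · intro j
            rw [hval1, hr, hz j]
            ring
      · -- generic case
        have hβ1' : -1 < β := lt_of_le_of_ne hβ1 (fun h => hβ h.symm)
        set a := Real.sqrt ((1+β)/2) with hadef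
        have ha0 : 0 < a := Real.sqrt_pos.2 (by linarith)
        have ha2 : a^2 = (1+β)/2 := Real.sq_sqrt (by linarith)
        set x : EuclideanSpace ℝ (Fin (m+3)) := WithLp.toLp 2 fun i =>
          if h : (i : ℕ) < m+1 then y ⟨(i:ℕ), by omega⟩ / (2*a)
          else if (i : ℕ) = m+1 then a else 0 with hxdef
        have hxj : ∀ j : Fin (m+1), x (j.castSucc.castSucc) = y (j.castSucc) / (2*a) := by
          intro j
          show (if h : ((j.castSucc.castSucc : Fin (m+3)) : ℕ) < m+1 then _ else _) = _
          rw [dif_pos (by simpa using j.isLt)]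
          exact congrArg (· / (2*a)) (congrArg y (Fin.ext (by simp)))
        have hxa : x ⟨m+1, by omega⟩ = a := by
          show (if h : m+1 < m+1 then _ else _) = a
          rw [dif_neg (by omega), if_pos rfl]
        have hxb : x ⟨m+2, by omega⟩ = 0 := by
          show (if h : m+2 < m+1 then y ⟨m+2, by omega⟩ / (2*a)
            else if m+2 = m+1 then a else 0) = (0:ℝ)
          rw [dif_neg (by omega), if_neg (by omega)]
        have hr : rad m x = a := by
          rw [rad, hxa, hxb]
          simpa using Real.sqrt_sq ha0.le
        have hxsum : ∑ j : Fin (m+1), x (j.castSucc.castSucc) ^ 2 = 1 - a^2 := by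
          have : ∀ j : Fin (m+1), x (j.castSucc.castSucc) ^ 2
              = y (j.castSucc) ^ 2 / (4*a^2) := fun j => by
            have h4 : ((2:ℝ)*a)^2 = 4*a^2 := by ring
            rw [hxj j, div_pow, h4]
          rw [Finset.sum_congr rfl fun j _ => this j, ← Finset.sum_div, hQy, ha2]
          rw [div_eq_iff (by intro h; apply hβ; nlinarith : (4:ℝ)*((1+β)/2) ≠ 0)]
          ring
        refine ⟨x, ?_, ?_⟩
        · rw [mem_sphere_iff_sum, sum3 (fun i => x i ^ 2), hxsum, hxa, hxb]
          ring
        · ext i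
          refine Fin.lastCases ?_ ?_ i
          · rw [show Fin.last (m+1) = (⟨m+1, by omega⟩ : Fin (m+2)) from rfl, hval2, hr, ha2]
            rw [← hβdef]; ring
          · intro j
            rw [hval1, hr, hxj j]
            field_simp
  · -- north pole
    intro x hx h0
    have hz : ∑ j : Fin (m+1), x (j.castSucc.castSucc) ^ 2 = 0 :=
      Finset.sum_eq_zero fun j _ => by
        rw [h0 _ (by simpa using by omega : ((j.castSucc.castSucc : Fin (m+3)) : ℕ) < m+2-1)]
        ring
    have hr : (rad m x) ^ 2 = 1 := by
      have := tail_sum x hx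
      rw [hz] at this; linarith
    ext i
    refine Fin.lastCases ?_ ?_ i
    · rw [show Fin.last (m+1) = (⟨m+1, by omega⟩ : Fin (m+2)) from rfl, hval2, hr]
      norm_num [northPole]
    · intro j
      rw [hval1, h0 _ (by simpa using by omega :
        ((j.castSucc.castSucc : Fin (m+3)) : ℕ) < m+2-1)]
      have : (northPole (m+2)) j.castSucc = 0 := by
        simp only [northPole, Fin.coe_castSucc]
        rw [if_neg (by omega)]
      rw [this]; ring
  · -- south pole
    intro x hx h1 h2
    have h1' : x ⟨m+1, by omega⟩ = 0 := h1
    have hr : rad m x = 0 := by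
      simp [rad, h1', h2]
    ext i
    refine Fin.lastCases ?_ ?_ i
    · rw [show Fin.last (m+1) = (⟨m+1, by omega⟩ : Fin (m+2)) from rfl, hval2, hr]
      simp [southPole]
    · intro j
      rw [hval1, hr]
      have : (southPole (m+2)) j.castSucc = 0 := by
        simp only [southPole, Fin.coe_castSucc]
        rw [if_neg (by omega)]
      rw [this]; ring
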